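/- Under the setup, let u, v ∈ V and let e₁ = (u₁, v₁), …, e_k = (u_k, v_k) be the edges of the unique path π_T̂(u, v) that belong to E⁻, listed in the order they occur along the path from u to v (so that, setting u₀ = u and v_{k+1} = v, the vertices uᵢ and v_{i+1} lie in the same connected component of 𝒯 for every 0 ≤ i ≤ k). Then the edge set of π_T̂(u, v) is contained in path(u) ∪ path(v) ∪ ⋃_{i=1}^{k} ({eᵢ} ∪ path(uᵢ) ∪ path(vᵢ)). (The inductive containment established in the proof of Lemma 4.4.) -/

import Mathlib

open SimpleGraph


private lemma walk_decomp {V : Type*} {F That : SimpleGraph V} {Eneg : Set (Sym2 V)}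
    (hE : ∀ a b : V, That.Adj a b → s(a,b) ∉ Eneg → F.Adj a b) :
    ∀ {u v : V} (p : That.Walk u v),
      (∃ w : F.Walk u v, w.edges = p.edges ∧ w.support = p.support) ∨
      (∃ x y, ∃ w : F.Walk u x, ∃ q : That.Walk y v, s(x,y) ∈ Eneg ∧
        p.edges = w.edges ++ s(x,y) :: q.edges ∧
        w.support.Sublist p.support ∧ q.support.Sublist p.support) := by
  intro u v p
  induction p with
  | nil => exact Or.inl ⟨.nil, rfl, rfl⟩
  | @cons a b c h p ih =>
    by_cases hneg : s(a,b) ∈ Eneg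
    · refine Or.inr ⟨a, b, .nil, p, hneg, by simp, by simp, ?_⟩
      simp [Walk.support_cons]
    · have hF : F.Adj a b := hE a b h hneg
      rcases ih with ⟨w, hw1, hw2⟩ | ⟨x, y, w, q, h1, h2, h3, h4⟩
      · exact Or.inl ⟨.cons hF w, by simp [hw1], by simp [Walk.support_cons, hw2]⟩
      · exact Or.inr ⟨x, y, .cons hF w, q, h1, by simp [h2],
          by simpa using h3.cons₂ a, by simp [Walk.support_cons]; exact h4.cons a⟩

private lemma seg_lemma {V : Type*} {F That : SimpleGraph V} {Eneg : Set (Sym2 V)}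
    (hE : ∀ a b : V, That.Adj a b → s(a,b) ∉ Eneg → F.Adj a b) :
    ∀ (n : ℕ) {u v : V} (p : That.Walk u v), p.length ≤ n → p.support.Nodup →
      ∀ e ∈ p.edges, e ∉ Eneg →
        ∃ a b, ∃ w : F.Walk a b, w.IsPath ∧ e ∈ w.edges ∧
          (a = u ∨ ∃ f ∈ p.edges, f ∈ Eneg ∧ a ∈ f) ∧
          (b = v ∨ ∃ f ∈ p.edges, f ∈ Eneg ∧ b ∈ f) := by
  intro n
  induction n with
  | zero =>
    intro u v p hlen hnd e he _
    interval_cases h : p.length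
    · rw [← Walk.length_edges, List.length_eq_zero_iff] at h
      simp [h] at he
  | succ n ih =>
    intro u v p hlen hnd e he hneg
    rcases walk_decomp hE p with ⟨w, hw1, hw2⟩ | ⟨x, y, w, q, h1, h2, h3, h4⟩
    · exact ⟨u, v, w, (Walk.isPath_def w).2 (hw2 ▸ hnd), hw1 ▸ he, Or.inl rfl, Or.inl rfl⟩
    · rw [h2] at he
      rcases List.mem_append.1 he with hew | heq
      · refine ⟨u, x, w, (Walk.isPath_def w).2 (hnd.sublist h3), hew, Or.inl rfl, Or.inr ?_⟩
        exact ⟨s(x,y), by rw [h2]; simp, h1, by simp⟩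
      · rcases List.mem_cons.1 heq with rfl | heq
        · exact absurd h1 hneg
        · have hql : q.length ≤ n := by
            have := congrArg List.length h2
            rw [Walk.length_edges] at this
            simp [Walk.length_edges] at this
            omega
          obtain ⟨a', b', w', hw', hew', ha, hb⟩ :=
            ih q hql (hnd.sublist h4) e heq hneg
          refine ⟨a', b', w', hw', hew', ?_, ?_⟩
          · rcases ha with rfl | ⟨f, hf1, hf2, hf3⟩
            · exact Or.inr ⟨_, by rw [h2]; simp, h1, by simp⟩
            · exact Or.inr ⟨f, by rw [h2]; simp [hf1], hf2, hf3⟩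
          · rcases hb with rfl | ⟨f, hf1, hf2, hf3⟩
            · exact Or.inl rfl
            · exact Or.inr ⟨f, by rw [h2]; simp [hf1], hf2, hf3⟩


/-- The inductive containment in the proof of Lemma 4.4: if the edges of the unique path in T̂ from u to v that belong to E⁻ are, in order, eᵢ = (uᵢ, vᵢ) for i = 1, …, k (with u₀ = u, v_{k+1} = v, and uᵢ in the same F-component as v_{i+1} for 0 ≤ i ≤ k), then the edge set of the path is contained in path(u) ∪ path(v) ∪ ⋃ᵢ ({eᵢ} ∪ path(uᵢ) ∪ path(vᵢ)). Here `U i` stands for uᵢ (0 ≤ i ≤ k) and `W i` stands for v_{i+1} (0 ≤ i ≤ k), so eᵢ = s(U i, W (i-1)) for 1 ≤ i ≤ k. -/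
theorem lemma_4_4_inductive_containment
    {V : Type*} [Fintype V] [DecidableEq V]
    -- `K` is a finite connected simple graph on vertex set `V`
    (K : SimpleGraph V) (hK : K.Connected)
    -- `F` is a spanning forest of `K` (an acyclic subgraph on all of `V`)
    (F : SimpleGraph V) (hFK : F ≤ K) (hFacyclic : F.IsAcyclic)
    -- a choice of root in each connected component of `F`
    (root : V → V)
    (hrootReach : ∀ v : V, F.Reachable v (root v))
    (hrootConst : ∀ u v : V, F.Reachable u v → root u = root v)
    -- `pathToRoot v` is the unique path in `F` from `v` to the root of its component
    (pathToRoot : (v : V) → F.Walk v (root v))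
    (hpathToRoot : ∀ v : V, (pathToRoot v).IsPath)
    -- `Eneg` and `Epos` are disjoint sets of edges of `K`, disjoint from the edges of `F`
    (Eneg Epos : Set (Sym2 V))
    (hEnegK : Eneg ⊆ K.edgeSet) (hEposK : Epos ⊆ K.edgeSet)
    (hdisjNP : Disjoint Eneg Epos)
    (hdisjNF : Disjoint Eneg F.edgeSet) (hdisjPF : Disjoint Epos F.edgeSet)
    -- `That` (= T̂) is the spanning tree with edge set E(F) ∪ Eneg
    (That : SimpleGraph V)
    (hThatEdges : That.edgeSet = F.edgeSet ∪ Eneg)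
    (hThatTree : That.IsTree)
    -- `GEdges` is the edge set of the output graph G: the union over e = (u,v) ∈ Eneg ∪ Epos
    -- of {e} ∪ path(u) ∪ path(v); `GVerts` is the set of vertices incident to an edge of G
    (GEdges : Set (Sym2 V))
    (hGEdges : GEdges = {s : Sym2 V | ∃ u v : V, s(u, v) ∈ Eneg ∪ Epos ∧
        (s = s(u, v) ∨ s ∈ (pathToRoot u).edges ∨ s ∈ (pathToRoot v).edges)})
    (GVerts : Set V)
    (hGVerts : GVerts = {x : V | ∃ s ∈ GEdges, x ∈ s})
    [DecidablePred (· ∈ Eneg)]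
    (u v : V) (p : That.Walk u v) (hp : p.IsPath)
    (k : ℕ) (U W : Fin (k + 1) → V)
    (hU0 : U 0 = u) (hWlast : W (Fin.last k) = v)
    (hfilter : p.edges.filter (· ∈ Eneg)
        = List.ofFn (fun j : Fin k => s(U j.succ, W j.castSucc)))
    (hcomp : ∀ i : Fin (k + 1), F.Reachable (U i) (W i)) :
    ∀ e ∈ p.edges,
      e ∈ (pathToRoot u).edges ∨ e ∈ (pathToRoot v).edges ∨
        ∃ j : Fin k, e = s(U j.succ, W j.castSucc) ∨
          e ∈ (pathToRoot (U j.succ)).edges ∨ e ∈ (pathToRoot (W j.castSucc)).edges := by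
  intro e he
  by_cases hneg : e ∈ Eneg
  · have hmem : e ∈ p.edges.filter (· ∈ Eneg) :=
      List.mem_filter.2 ⟨he, by simpa using hneg⟩
    rw [hfilter] at hmem
    obtain ⟨j, hj⟩ := List.mem_ofFn.1 hmem
    exact Or.inr (Or.inr ⟨j, Or.inl hj.symm⟩)
  · have hE : ∀ a b : V, That.Adj a b → s(a,b) ∉ Eneg → F.Adj a b := by
      intro a b hab hn
      have h : s(a,b) ∈ That.edgeSet := hab
      rw [hThatEdges] at h
      rcases h with h | h
      · exact h
      · exact absurd h hn
    obtain ⟨a, b, w, hw, hew, ha, hb⟩ :=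
      seg_lemma hE p.length p le_rfl hp.support_nodup e he hneg
    have hr : root a = root b := hrootConst a b w.reachable
    have key : e ∈ (pathToRoot a).edges ∨ e ∈ (pathToRoot b).edges := by
      set w2 : F.Walk a b :=
        (pathToRoot a).append (((pathToRoot b).reverse).copy hr.symm rfl) with hw2
      have huniq : (⟨w, hw⟩ : F.Path a b) = ⟨w2.bypass, w2.bypass_isPath⟩ :=
        hFacyclic.path_unique _ _
      have hedges : w.edges = w2.bypass.edges :=
        congrArg (fun q : F.Path a b => q.1.edges) huniq
      have hsub : e ∈ w2.edges := w2.edges_bypass_subset (hedges ▸ hew)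
      rw [hw2] at hsub
      simpa [Walk.edges_append, Walk.edges_copy, Walk.edges_reverse,
        List.mem_reverse] using hsub
    have resolve : ∀ c : V,
        (c = u ∨ c = v ∨ ∃ f ∈ p.edges, f ∈ Eneg ∧ c ∈ f) →
        e ∈ (pathToRoot c).edges →
        (e ∈ (pathToRoot u).edges ∨ e ∈ (pathToRoot v).edges ∨
          ∃ j : Fin k, e = s(U j.succ, W j.castSucc) ∨
            e ∈ (pathToRoot (U j.succ)).edges ∨
            e ∈ (pathToRoot (W j.castSucc)).edges) := by
      intro c hc hec
      rcases hc with rfl | rfl | ⟨f, hf1, hf2, hf3⟩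
      · exact Or.inl hec
      · exact Or.inr (Or.inl hec)
      · have hmem : f ∈ p.edges.filter (· ∈ Eneg) :=
          List.mem_filter.2 ⟨hf1, by simpa using hf2⟩
        rw [hfilter] at hmem
        obtain ⟨j, hj⟩ := List.mem_ofFn.1 hmem
        rw [← hj] at hf3
        rcases Sym2.mem_iff.1 hf3 with rfl | rfl
        · exact Or.inr (Or.inr ⟨j, Or.inr (Or.inl hec)⟩)
        · exact Or.inr (Or.inr ⟨j, Or.inr (Or.inr hec)⟩)
    rcases key with hk | hk
    · exact resolve a (ha.imp id Or.inr) hk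
    · refine resolve b ?_ hk
      rcases hb with rfl | h
      · exact Or.inr (Or.inl rfl)
      · exact Or.inr (Or.inr h)
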